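/- Let n be a natural number and a, b, c, d real numbers such that all Pochhammer symbols (c)_k, (d)_k, (a−c−n+1)_k, (a−d−n+1)_k are nonzero for 0 ≤ k ≤ n. Then ∑_{k=0}^n [(−n)_k (a)_k (b)_k]/[(c)_k (d)_k k!] = [(c−a)_n (d−a)_n]/[(c)_n (d)_n] · ∑_{k=0}^n [(−n)_k (a)_k (a+b−c−d−n+1)_k]/[(a−c−n+1)_k (a−d−n+1)_k k!]. -/

import Mathlib

/-- The Pochhammer symbol `(a)_k = a (a+1) ⋯ (a+k-1)` over ℝ. -/
noncomputable def poch (a : ℝ) (k : ℕ) : ℝ := (ascPochhammer ℝ k).eval a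

lemma poch_zero (a : ℝ) : poch a 0 = 1 := by simp [poch]

lemma poch_one (a : ℝ) : poch a 1 = a := by simp [poch]

lemma poch_succ (a : ℝ) (k : ℕ) : poch a (k + 1) = poch a k * (a + k) := by
  simpa [poch] using ascPochhammer_succ_eval k a

lemma poch_add (a : ℝ) (m l : ℕ) : poch a (m + l) = poch a m * poch (a + m) l := by
  have h := congrArg (Polynomial.eval a) (ascPochhammer_mul ℝ m l)
  simpa [poch, Polynomial.eval_comp] using h.symm

lemma poch_neg_nat (n k : ℕ) : poch (-(n : ℝ)) k = (-1) ^ k * (n.descFactorial k : ℝ) := by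
  induction k with
  | zero => simp [poch_zero]
  | succ k ih =>
    rw [poch_succ, ih]
    rcases le_or_gt (k + 1) n with h | h
    · rw [Nat.descFactorial_succ]
      have : ((n - k : ℕ) : ℝ) = (n : ℝ) - k := by
        have : k ≤ n := by omega
        push_cast [this]; ring
      push_cast [this]
      ring
    · have h1 : n.descFactorial (k + 1) = 0 := Nat.descFactorial_eq_zero_iff_lt.2 h
      rcases le_or_gt (k+1) n with h' | h'
      · omega
      rcases Nat.lt_or_ge n (k+1) with _ | _
      · rcases Nat.eq_or_lt_of_le (Nat.lt_succ_iff.mp h) with rfl | hlt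
        · simp [h1]
        · have h2 : n.descFactorial k = 0 := Nat.descFactorial_eq_zero_iff_lt.2 hlt
          simp [h1, h2]
      · omega

lemma vand_poly (k : ℕ) : ∀ B C : ℝ,
    ∑ j ∈ Finset.range (k + 1),
      (-1) ^ j * (k.choose j : ℝ) * poch B j * poch (C + j) (k - j) = poch (C - B) k := by
  induction k with
  | zero => intro B C; simp [poch_zero]
  | succ k ih =>
    intro B C
    have hu : ∑ i ∈ Finset.range (k + 1),
        (-1) ^ (i + 1) * (k.choose i : ℝ) * poch B (i + 1) * poch (C + ((i + 1 : ℕ) : ℝ)) (k - i)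
        = -B * poch (C - B) k := by
      calc ∑ i ∈ Finset.range (k + 1),
            (-1) ^ (i + 1) * (k.choose i : ℝ) * poch B (i + 1) * poch (C + ((i + 1 : ℕ) : ℝ)) (k - i)
          = ∑ i ∈ Finset.range (k + 1),
            (-B) * ((-1) ^ i * (k.choose i : ℝ) * poch (B + 1) i * poch ((C + 1) + i) (k - i)) := by
            refine Finset.sum_congr rfl fun i _ => ?_
            have h1 : poch B (i + 1) = B * poch (B + 1) i := by
              have := poch_add B 1 i
              simpa [poch_one, add_comm] using this
            have h2 : C + ((i + 1 : ℕ) : ℝ) = (C + 1) + i := by push_cast; ring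
            rw [h1, h2]; ring
        _ = -B * poch (C - B) k := by
            rw [← Finset.mul_sum]
            have h3 : (C + 1) - (B + 1) = C - B := by ring
            rw [ih (B + 1) (C + 1), h3]
    have hw : poch C (k + 1) + ∑ i ∈ Finset.range (k + 1),
        (-1) ^ (i + 1) * (k.choose (i + 1) : ℝ) * poch B (i + 1) * poch (C + ((i + 1 : ℕ) : ℝ)) (k - i)
        = (C + k) * poch (C - B) k := by
      have hsum : poch C (k + 1) + ∑ i ∈ Finset.range (k + 1),
          (-1) ^ (i + 1) * (k.choose (i + 1) : ℝ) * poch B (i + 1) * poch (C + ((i + 1 : ℕ) : ℝ)) (k - i)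
          = ∑ j ∈ Finset.range (k + 2),
            (-1) ^ j * (k.choose j : ℝ) * poch B j * poch (C + j) (k + 1 - j) := by
        rw [Finset.sum_range_succ' (fun j => (-1) ^ j * (k.choose j : ℝ) * poch B j * poch (C + (j : ℝ)) (k + 1 - j)) (k + 1)]
        rw [add_comm]
        congr 1
        · refine Finset.sum_congr rfl fun i hi => ?_
          have h6 : k + 1 - (i + 1) = k - i := by omega
          rw [h6]
        · simp [poch_zero]
      rw [hsum, Finset.sum_range_succ, Nat.choose_succ_self]
      simp only [Nat.cast_zero, mul_zero, zero_mul, add_zero]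
      calc ∑ j ∈ Finset.range (k + 1), (-1) ^ j * (k.choose j : ℝ) * poch B j * poch (C + j) (k + 1 - j)
          = ∑ j ∈ Finset.range (k + 1), (C + k) * ((-1) ^ j * (k.choose j : ℝ) * poch B j * poch (C + j) (k - j)) := by
            refine Finset.sum_congr rfl fun j hj => ?_
            have hjk : j ≤ k := by simpa [Nat.lt_succ_iff] using hj
            have h4 : k + 1 - j = (k - j) + 1 := by omega
            rw [h4, poch_succ]
            have h5 : (C + j) + ((k - j : ℕ) : ℝ) = C + k := by
              have : ((k - j : ℕ) : ℝ) = (k : ℝ) - j := by push_cast [hjk]; ring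
              rw [this]; ring
            rw [h5]; ring
        _ = (C + k) * poch (C - B) k := by rw [← Finset.mul_sum, ih B C]
    rw [Finset.sum_range_succ' (fun j => (-1) ^ j * ((k + 1).choose j : ℝ) * poch B j * poch (C + (j : ℝ)) (k + 1 - j)) (k + 1)]
    have hsplit : ∑ i ∈ Finset.range (k + 1),
        (-1) ^ (i + 1) * ((k + 1).choose (i + 1) : ℝ) * poch B (i + 1) * poch (C + ((i + 1 : ℕ) : ℝ)) (k + 1 - (i + 1))
        = (∑ i ∈ Finset.range (k + 1),
            (-1) ^ (i + 1) * (k.choose i : ℝ) * poch B (i + 1) * poch (C + ((i + 1 : ℕ) : ℝ)) (k - i))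
          + ∑ i ∈ Finset.range (k + 1),
            (-1) ^ (i + 1) * (k.choose (i + 1) : ℝ) * poch B (i + 1) * poch (C + ((i + 1 : ℕ) : ℝ)) (k - i) := by
      rw [← Finset.sum_add_distrib]
      refine Finset.sum_congr rfl fun i hi => ?_
      have h6 : k + 1 - (i + 1) = k - i := by omega
      rw [h6, Nat.choose_succ_succ]
      push_cast
      ring
    rw [hsplit]
    have h7 : (-1 : ℝ) ^ 0 * ((k + 1).choose 0 : ℝ) * poch B 0 * poch (C + ((0 : ℕ) : ℝ)) (k + 1 - 0) = poch C (k + 1) := by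
      simp [poch_zero]
    rw [h7]
    have : ∑ i ∈ Finset.range (k + 1),
            (-1) ^ (i + 1) * (k.choose i : ℝ) * poch B (i + 1) * poch (C + ((i + 1 : ℕ) : ℝ)) (k - i)
          + ∑ i ∈ Finset.range (k + 1),
            (-1) ^ (i + 1) * (k.choose (i + 1) : ℝ) * poch B (i + 1) * poch (C + ((i + 1 : ℕ) : ℝ)) (k - i)
          + poch C (k + 1)
        = -B * poch (C - B) k + (C + k) * poch (C - B) k := by
      rw [hu, add_assoc, add_comm (∑ i ∈ Finset.range (k + 1),
            (-1) ^ (i + 1) * (k.choose (i + 1) : ℝ) * poch B (i + 1) * poch (C + ((i + 1 : ℕ) : ℝ)) (k - i)), hw]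
    rw [this, poch_succ]
    ring

lemma vand_div (k : ℕ) (B C : ℝ) (hC : ∀ j ≤ k, poch C j ≠ 0) :
    ∑ j ∈ Finset.range (k + 1),
      poch (-(k : ℝ)) j * poch B j / (poch C j * (j.factorial : ℝ))
      = poch (C - B) k / poch C k := by
  have hCk : poch C k ≠ 0 := hC k le_rfl
  calc ∑ j ∈ Finset.range (k + 1),
        poch (-(k : ℝ)) j * poch B j / (poch C j * (j.factorial : ℝ))
      = ∑ j ∈ Finset.range (k + 1),
        ((-1) ^ j * (k.choose j : ℝ) * poch B j * poch (C + j) (k - j)) / poch C k := by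
        refine Finset.sum_congr rfl fun j hj => ?_
        have hjk : j ≤ k := by simpa [Nat.lt_succ_iff] using hj
        have hCj : poch C j ≠ 0 := hC j hjk
        rw [poch_neg_nat, Nat.descFactorial_eq_factorial_mul_choose]
        have hck : poch C k = poch C j * poch (C + j) (k - j) := by
          have := poch_add C j (k - j)
          rwa [Nat.add_sub_cancel' hjk] at this
        have hC2 : poch (C + j) (k - j) ≠ 0 := by
          rw [hck] at hCk; exact (mul_ne_zero_iff.mp hCk).2
        rw [hck]
        have hfj : (j.factorial : ℝ) ≠ 0 := by positivity
        field_simp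
        push_cast
        ring
    _ = poch (C - B) k / poch C k := by
        rw [← Finset.sum_div, vand_poly]

lemma poch_reflect (j : ℕ) : ∀ x : ℝ, poch x j = (-1) ^ j * poch (-x - j + 1) j := by
  induction j with
  | zero => intro x; simp [poch_zero]
  | succ j ih =>
    intro x
    rw [poch_succ, ih x]
    have h : (-x - ((j + 1 : ℕ) : ℝ) + 1) = -x - j := by push_cast; ring
    rw [h]
    have h2 : poch (-x - (j : ℝ)) (j + 1) = (-x - j) * poch (-x - (j : ℝ) + 1) j := by
      rw [show j + 1 = 1 + j by omega, poch_add, poch_one]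
      push_cast
      ring_nf
    rw [h2]
    ring

lemma step (n : ℕ) (a b c d : ℝ)
    (hc : ∀ k ≤ n, poch c k ≠ 0) (hd : ∀ k ≤ n, poch d k ≠ 0)
    (h1 : ∀ k ≤ n, poch (a - c - n + 1) k ≠ 0) :
    ∑ k ∈ Finset.range (n + 1),
        poch (-(n : ℝ)) k * poch a k * poch b k /
          (poch c k * poch d k * (k.factorial : ℝ))
      = poch (c - a) n / poch c n *
        ∑ k ∈ Finset.range (n + 1),
          poch (-(n : ℝ)) k * poch a k * poch (d - b) k /
            (poch d k * poch (a - c - n + 1) k * (k.factorial : ℝ)) := by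
  set g : ℕ → ℕ → ℝ := fun k j =>
    poch (-(n : ℝ)) k * poch a k / (poch c k * (k.factorial : ℝ)) *
      (poch (-(k : ℝ)) j * poch (d - b) j / (poch d j * (j.factorial : ℝ))) with hg
  have expand : ∀ k ∈ Finset.range (n + 1),
      poch (-(n : ℝ)) k * poch a k * poch b k /
          (poch c k * poch d k * (k.factorial : ℝ))
        = ∑ j ∈ Finset.range (k + 1), g k j := by
    intro k hk
    have hkn : k ≤ n := by simpa [Nat.lt_succ_iff] using hk
    have hdk : ∀ j ≤ k, poch d j ≠ 0 := fun j hj => hd j (hj.trans hkn)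
    have hv := vand_div k (d - b) d hdk
    have hb : d - (d - b) = b := by ring
    rw [hb] at hv
    rw [← Finset.mul_sum, hv]
    rw [div_mul_div_comm]
    congr 1
    all_goals ring
  rw [Finset.sum_congr rfl expand]
  have hswap : ∑ k ∈ Finset.range (n + 1), ∑ j ∈ Finset.range (k + 1), g k j
      = ∑ j ∈ Finset.range (n + 1), ∑ k ∈ Finset.Ico j (n + 1), g k j := by
    have h := Finset.sum_Ico_Ico_comm 0 (n + 1) (fun j k => g k j)
    simp only [Finset.range_eq_Ico]
    exact h.symm
  rw [hswap]
  have key : ∀ j ∈ Finset.range (n + 1),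
      ∑ k ∈ Finset.Ico j (n + 1), g k j
        = poch (c - a) n / poch c n *
            (poch (-(n : ℝ)) j * poch a j * poch (d - b) j /
              (poch d j * poch (a - c - n + 1) j * (j.factorial : ℝ))) := by
    intro j hj
    have hjn : j ≤ n := by simpa [Nat.lt_succ_iff] using hj
    rw [Finset.sum_Ico_eq_sum_range]
    have hnj : n + 1 - j = (n - j) + 1 := by omega
    rw [hnj]
    set P : ℝ := (-1) ^ j * poch (-(n : ℝ)) j * poch a j * poch (d - b) j /
      (poch c j * poch d j * (j.factorial : ℝ)) with hP
    have point : ∀ m ∈ Finset.range ((n - j) + 1),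
        g (j + m) j = P * (poch (-((n - j : ℕ) : ℝ)) m * poch (a + j) m /
          (poch (c + j) m * (m.factorial : ℝ))) := by
      intro m hm
      have hmn : m ≤ n - j := by simpa [Nat.lt_succ_iff] using hm
      have hjm : j + m ≤ n := by omega
      have e1 : poch (-(n : ℝ)) (j + m) = poch (-(n : ℝ)) j * poch (-((n - j : ℕ) : ℝ)) m := by
        rw [poch_add]
        congr 2
        push_cast [hjn]
        ring
      have e2 : poch a (j + m) = poch a j * poch (a + j) m := poch_add a j m
      have e3 : poch c (j + m) = poch c j * poch (c + j) m := poch_add c j m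
      have e4 : poch (-((j + m : ℕ) : ℝ)) j = (-1) ^ j * ((j + m).descFactorial j : ℝ) :=
        poch_neg_nat (j + m) j
      have e5 : ((j + m).factorial : ℝ) = ((j + m).descFactorial j : ℝ) * (m.factorial : ℝ) := by
        rw [Nat.descFactorial_eq_factorial_mul_choose]
        push_cast
        rw [← Nat.choose_mul_factorial_mul_factorial (Nat.le_add_right j m)]
        push_cast
        have : j + m - j = m := by omega
        rw [this]
        ring
      have hc1 : poch c j ≠ 0 := hc j hjn
      have hc2 : poch (c + j) m ≠ 0 := by
        have := hc (j + m) hjm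
        rw [e3] at this
        exact (mul_ne_zero_iff.mp this).2
      have hd1 : poch d j ≠ 0 := hd j hjn
      have hf1 : ((j + m).descFactorial j : ℝ) ≠ 0 := by
        have : (j + m).descFactorial j ≠ 0 := by
          intro h
          have := Nat.descFactorial_eq_zero_iff_lt.mp h
          omega
        exact_mod_cast Nat.cast_ne_zero.mpr this
      have hf2 : (m.factorial : ℝ) ≠ 0 := by positivity
      have hf3 : ((j).factorial : ℝ) ≠ 0 := by positivity
      simp only [hg]
      rw [e1, e2, e3, e4, e5, hP]
      field_simp
    rw [Finset.sum_congr rfl point, ← Finset.mul_sum]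
    have hcm : ∀ m ≤ n - j, poch (c + j) m ≠ 0 := by
      intro m hm
      have hjm : j + m ≤ n := by omega
      have := hc (j + m) hjm
      rw [poch_add c j m] at this
      exact (mul_ne_zero_iff.mp this).2
    have hv2 := vand_div (n - j) (a + j) (c + j) hcm
    have harg : (c + (j : ℝ)) - (a + j) = c - a := by ring
    rw [harg] at hv2
    rw [hv2]
    -- now algebra
    have hcn : poch c n = poch c j * poch (c + j) (n - j) := by
      have := poch_add c j (n - j)
      rwa [Nat.add_sub_cancel' hjn] at this
    have hca : poch (c - a) n = poch (c - a) (n - j) * ((-1) ^ j * poch (a - c - n + 1) j) := by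
      have h8 := poch_add (c - a) (n - j) j
      rw [Nat.sub_add_cancel hjn] at h8
      rw [h8]
      congr 1
      rw [poch_reflect j (c - a + ((n - j : ℕ) : ℝ))]
      congr 2
      push_cast [hjn]
      ring
    have hc1 : poch c j ≠ 0 := hc j hjn
    have hc3 : poch (c + j) (n - j) ≠ 0 := by
      have := hc n le_rfl
      rw [hcn] at this
      exact (mul_ne_zero_iff.mp this).2
    have hd1 : poch d j ≠ 0 := hd j hjn
    have he1 : poch (a - c - n + 1) j ≠ 0 := h1 j hjn
    have hf3 : ((j).factorial : ℝ) ≠ 0 := by positivity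
    rw [hP, hcn, hca]
    field_simp
  rw [Finset.sum_congr rfl key, ← Finset.mul_sum]

theorem thomae_A1 (n : ℕ) (a b c d : ℝ)
    (hc : ∀ k ≤ n, poch c k ≠ 0) (hd : ∀ k ≤ n, poch d k ≠ 0)
    (h1 : ∀ k ≤ n, poch (a - c - n + 1) k ≠ 0)
    (h2 : ∀ k ≤ n, poch (a - d - n + 1) k ≠ 0) :
    ∑ k ∈ Finset.range (n + 1),
        (poch (-(n : ℝ)) k * poch a k * poch b k) /
          (poch c k * poch d k * (k.factorial : ℝ)) =
      (poch (c - a) n * poch (d - a) n) / (poch c n * poch d n) *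
        ∑ k ∈ Finset.range (n + 1),
          (poch (-(n : ℝ)) k * poch a k * poch (a + b - c - d - n + 1) k) /
            (poch (a - c - n + 1) k * poch (a - d - n + 1) k * (k.factorial : ℝ)) := by
  have s1 := step n a b c d hc hd h1
  have s2 := step n a (d - b) d (a - c - n + 1) hd h1 h2
  rw [show (a - c - (n : ℝ) + 1) - (d - b) = a + b - c - d - n + 1 from by ring] at s2
  rw [s1, s2]
  ring
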